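/- Szegő's estimate: for x > 1, E_l(lx) = (1/√(2πl)) (ex)^l · x/(x−1) · (1 + ε_l(x)), where ε_l(x) → 0 as l → ∞ uniformly for x in compact subsets of (1,∞). Consequently, if k/m → β and n/m → τ with r² < β < τ < |z₀|², then E_{k−1}(m|z₀|²)/E_{n−1}(m|z₀|²) → 0 exponentially fast as m → ∞. -/

import Mathlib

open MeasureTheory Metric Complex Filter

noncomputable def ER (k : ℤ) (x : ℝ) : ℝ :=
  ∑ j ∈ Finset.range (k + 1).toNat, x ^ j / (Nat.factorial j)

noncomputable def TT (l : ℕ) (x : ℝ) : ℝ :=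
  ∑ i ∈ Finset.range (l+1), (l.descFactorial i : ℝ) / (l*x)^i

noncomputable def eps (l : ℕ) (x : ℝ) : ℝ :=
  (Real.sqrt Real.pi / Stirling.stirlingSeq l) * (TT l x * ((x-1)/x)) - 1

lemma d_le (l i : ℕ) : (l.descFactorial i : ℝ) ≤ (l:ℝ)^i := by
  exact_mod_cast Nat.descFactorial_le_pow l i

lemma d_ge (l : ℕ) (hl : 1 ≤ l) (i : ℕ) :
    (1 - (i:ℝ)^2 / l) * (l:ℝ)^i ≤ (l.descFactorial i : ℝ) := by
  have hlp : (0:ℝ) < (l:ℝ) := by exact_mod_cast hl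
  induction i with
  | zero => simp
  | succ i ih =>
    rw [Nat.descFactorial_succ]
    push_cast
    by_cases hil : i < l
    · have hsub : ((l - i : ℕ) : ℝ) = (l:ℝ) - i := by
        push_cast [Nat.cast_sub hil.le]; ring
      have hpow : (0:ℝ) ≤ (l:ℝ)^i := by positivity
      have hkey : (1 - ((i:ℝ)+1)^2 / l) * (l:ℝ)^(i+1) ≤
          ((l:ℝ) - i) * ((1 - (i:ℝ)^2 / l) * (l:ℝ)^i) := by
        have e1 : (1 - ((i:ℝ)+1)^2 / l) * (l:ℝ)^(i+1) =
            (((l:ℝ) - ((i:ℝ)+1)^2)) * (l:ℝ)^i := by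
          field_simp; ring
        have e2 : ((l:ℝ) - i) * ((1 - (i:ℝ)^2 / l) * (l:ℝ)^i) =
            (((l:ℝ) - i) * ((l:ℝ) - (i:ℝ)^2) / l) * (l:ℝ)^i := by
          field_simp
        rw [e1, e2]
        apply mul_le_mul_of_nonneg_right _ hpow
        rw [le_div_iff₀ hlp]
        have hi0 : (0:ℝ) ≤ (i:ℝ) := Nat.cast_nonneg i
        nlinarith
      calc (1 - ((i:ℝ)+1)^2 / l) * (l:ℝ)^(i+1)
          ≤ ((l:ℝ) - i) * ((1 - (i:ℝ)^2 / l) * (l:ℝ)^i) := hkey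
        _ ≤ ((l:ℝ) - i) * (l.descFactorial i : ℝ) := by
            apply mul_le_mul_of_nonneg_left ih
            have : (i:ℝ) < (l:ℝ) := by exact_mod_cast hil
            linarith
        _ = ((l - i : ℕ):ℝ) * (l.descFactorial i : ℝ) := by rw [hsub]
    · have h0 : l - i = 0 := by omega
      rw [h0]
      push_cast
      rw [zero_mul]
      apply mul_nonpos_of_nonpos_of_nonneg
      · have h1 : (l:ℝ) ≤ ((i:ℝ)+1)^2 := by
          have : (l:ℝ) ≤ (i:ℝ) := by exact_mod_cast not_lt.mp hil
          nlinarith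
        have := (one_le_div hlp).mpr h1
        linarith
      · positivity

lemma ER_eq (l : ℕ) (x : ℝ) (hx : 0 < x) (hl : 1 ≤ l) :
    ER (l : ℤ) ((l : ℝ) * x) = ((l:ℝ)*x)^l / (Nat.factorial l) * TT l x := by
  have hlx : (0:ℝ) < (l:ℝ) * x := by
    have : (0:ℝ) < (l:ℝ) := by exact_mod_cast hl
    positivity
  have htoNat : ((l : ℤ) + 1).toNat = l + 1 := by omega
  rw [ER, htoNat, TT, Finset.mul_sum]
  rw [← Finset.sum_range_reflect]
  apply Finset.sum_congr rfl
  intro i hi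
  have hil : i ≤ l := by simp [Finset.mem_range] at hi; omega
  have hfac : ((l - i).factorial * l.descFactorial i : ℕ) = l.factorial :=
    Nat.factorial_mul_descFactorial hil
  have hfacR : ((l - i).factorial : ℝ) * (l.descFactorial i : ℝ) = (l.factorial : ℝ) := by
    exact_mod_cast hfac
  have hpow : ((l:ℝ)*x)^(l - i) * ((l:ℝ)*x)^i = ((l:ℝ)*x)^l := by
    rw [← pow_add]; congr 1; omega
  have h1 : (0:ℝ) < ((l:ℝ)*x)^i := by positivity
  have h2 : (0:ℝ) < ((l - i).factorial : ℝ) := by positivity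
  have h3 : (0:ℝ) < (l.factorial : ℝ) := by positivity
  simp only [Nat.add_sub_cancel]
  field_simp
  rw [← hfacR, ← hpow]
  ring

lemma TT_bounds (l : ℕ) (hl : 1 ≤ l) {a x : ℝ} (ha : 1 < a) (hax : a ≤ x) :
    0 ≤ x/(x-1) - TT l x ∧
    x/(x-1) - TT l x ≤ (∑' i:ℕ, (i:ℝ)^2 * (1/a)^i)/l + (1/a)^(l+1) / (1 - 1/a) := by
  have hx1 : 1 < x := lt_of_lt_of_le ha hax
  have hx0 : 0 < x := by linarith
  have hl0 : (0:ℝ) < (l:ℝ) := by exact_mod_cast hl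
  set q := 1/x with hqdef
  have hq0 : 0 ≤ q := by positivity
  have hq1 : q < 1 := by rw [hqdef, div_lt_one hx0]; linarith
  have hqa : q ≤ 1/a := by
    apply one_div_le_one_div_of_le (by linarith) hax
  have ha0 : (0:ℝ) < 1/a := by positivity
  have ha1 : 1/a < 1 := by rw [div_lt_one (by linarith)]; exact ha
  have hgeo : Summable (fun i : ℕ => q ^ i) := summable_geometric_of_lt_one hq0 hq1
  have hXq : x/(x-1) = ∑' i : ℕ, q ^ i := by
    rw [tsum_geometric_of_lt_one hq0 hq1, hqdef]
    field_simp
  -- rewrite TT terms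
  have hterm : ∀ i : ℕ, (l.descFactorial i : ℝ) / ((l:ℝ)*x)^i
      = ((l.descFactorial i : ℝ) / (l:ℝ)^i) * q ^ i := by
    intro i
    rw [mul_pow, hqdef, div_pow]
    field_simp; simp
  have hd1 : ∀ i : ℕ, (l.descFactorial i : ℝ) / (l:ℝ)^i ≤ 1 := by
    intro i
    rw [div_le_one (by positivity)]
    exact d_le l i
  have hd2 : ∀ i : ℕ, 1 - (i:ℝ)^2/l ≤ (l.descFactorial i : ℝ) / (l:ℝ)^i := by
    intro i
    rw [le_div_iff₀ (by positivity : (0:ℝ) < (l:ℝ)^i)]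
    exact d_ge l hl i
  have hd0 : ∀ i : ℕ, 0 ≤ (l.descFactorial i : ℝ) / (l:ℝ)^i := by
    intro i; positivity
  -- split the tsum
  have hsplit : (∑ i ∈ Finset.range (l+1), q ^ i) + q^(l+1) * (1-q)⁻¹ = ∑' i : ℕ, q ^ i := by
    rw [← Summable.sum_add_tsum_nat_add (l+1) hgeo]
    congr 1
    simp only [pow_add]
    rw [tsum_mul_right, tsum_geometric_of_lt_one hq0 hq1]
    ring
  have hdiff : x/(x-1) - TT l x
      = (∑ i ∈ Finset.range (l+1), (1 - (l.descFactorial i : ℝ)/(l:ℝ)^i) * q ^ i)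
        + q^(l+1) * (1-q)⁻¹ := by
    rw [hXq, ← hsplit, TT]
    rw [Finset.sum_congr rfl (fun i _ => hterm i)]
    have hC : (∑ i ∈ Finset.range (l+1), (1 - (l.descFactorial i : ℝ)/(l:ℝ)^i) * q ^ i)
        = (∑ i ∈ Finset.range (l+1), q ^ i)
          - ∑ i ∈ Finset.range (l+1), (l.descFactorial i : ℝ)/(l:ℝ)^i * q ^ i := by
      rw [← Finset.sum_sub_distrib]
      apply Finset.sum_congr rfl
      intro i _; ring
    rw [hC]
    ring
  constructor
  · rw [hdiff]
    have h1 : 0 ≤ ∑ i ∈ Finset.range (l+1), (1 - (l.descFactorial i : ℝ)/(l:ℝ)^i) * q ^ i := by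
      apply Finset.sum_nonneg
      intro i _
      apply mul_nonneg (by linarith [hd1 i]) (by positivity)
    have h2 : (0:ℝ) ≤ q^(l+1) * (1-q)⁻¹ := by
      apply mul_nonneg (by positivity)
      rw [inv_nonneg]
      linarith
    linarith
  · rw [hdiff]
    have hsum : Summable (fun i : ℕ => (i:ℝ)^2 * (1/a)^i) := by
      have := summable_pow_mul_geometric_of_norm_lt_one 2 (r := 1/a)
        (by rw [Real.norm_eq_abs, abs_of_pos ha0]; exact ha1)
      simpa using this
    have h1 : (∑ i ∈ Finset.range (l+1), (1 - (l.descFactorial i : ℝ)/(l:ℝ)^i) * q ^ i)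
        ≤ (∑' i:ℕ, (i:ℝ)^2 * (1/a)^i)/l := by
      calc (∑ i ∈ Finset.range (l+1), (1 - (l.descFactorial i : ℝ)/(l:ℝ)^i) * q ^ i)
          ≤ ∑ i ∈ Finset.range (l+1), ((i:ℝ)^2/l) * (1/a) ^ i := by
            apply Finset.sum_le_sum
            intro i _
            apply mul_le_mul (by linarith [hd2 i]) (pow_le_pow_left₀ hq0 hqa i)
              (by positivity) (by positivity)
        _ = (∑ i ∈ Finset.range (l+1), (i:ℝ)^2 * (1/a) ^ i)/l := by
            rw [Finset.sum_div]
            apply Finset.sum_congr rfl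
            intro i _; ring
        _ ≤ (∑' i:ℕ, (i:ℝ)^2 * (1/a)^i)/l := by
            gcongr
            exact Summable.sum_le_tsum (Finset.range (l+1)) (fun i _ => by positivity) hsum
    have h2 : q^(l+1) * (1-q)⁻¹ ≤ (1/a)^(l+1) / (1 - 1/a) := by
      rw [div_eq_mul_inv]
      apply mul_le_mul (pow_le_pow_left₀ hq0 hqa (l+1))
      · apply inv_anti₀ (by linarith)
        linarith
      · rw [inv_nonneg]; linarith
      · positivity
    linarith

lemma eq_part (l : ℕ) (hl : 1 ≤ l) (x : ℝ) (hx : 1 < x) :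
    ER (l : ℤ) ((l : ℝ) * x) =
      (1 / Real.sqrt (2 * Real.pi * l)) * (Real.exp 1 * x) ^ l * (x / (x - 1)) *
        (1 + eps l x) := by
  have hx0 : (0:ℝ) < x := by linarith
  have hL : (0:ℝ) < (l:ℝ) := by exact_mod_cast hl
  have hs : (0:ℝ) < Real.sqrt (2 * (l:ℝ)) := Real.sqrt_pos.mpr (by positivity)
  have hp : (0:ℝ) < Real.sqrt Real.pi := Real.sqrt_pos.mpr Real.pi_pos
  have hst : Stirling.stirlingSeq l = (Nat.factorial l : ℝ) /
      (Real.sqrt (2 * (l:ℝ)) * ((l:ℝ) / Real.exp 1) ^ l) := rfl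
  have hF : (0:ℝ) < (Nat.factorial l : ℝ) := by positivity
  have hE : (0:ℝ) < Real.exp 1 := Real.exp_pos 1
  have hsq : Real.sqrt (2 * Real.pi * (l:ℝ)) =
      Real.sqrt (2 * (l:ℝ)) * Real.sqrt Real.pi := by
    rw [← Real.sqrt_mul (by positivity)]
    ring_nf
  rw [ER_eq l x hx0 hl, eps, hsq, hst]
  have hdiv : ((l:ℝ) / Real.exp 1) ^ l = (l:ℝ)^l / (Real.exp 1)^l := div_pow _ _ _
  rw [hdiv]
  rw [mul_pow, mul_pow]
  have n1 : x ≠ 0 := ne_of_gt hx0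
  have n2 : x - 1 ≠ 0 := by intro h; apply absurd hx; simp; nlinarith
  have n3 : Real.sqrt (2 * (l:ℝ)) ≠ 0 := ne_of_gt hs
  have n4 : Real.sqrt Real.pi ≠ 0 := ne_of_gt hp
  have n5 : (Nat.factorial l : ℝ) ≠ 0 := ne_of_gt hF
  have n6 : (Real.exp 1)^l ≠ 0 := by positivity
  have n7 : ((l:ℝ))^l ≠ 0 := by positivity
  field_simp
  ring

lemma unif_part (Kc : Set ℝ) (hK : IsCompact Kc) (hK1 : Kc ⊆ Set.Ioi 1) :
    TendstoUniformlyOn (fun l x => eps l x) 0 atTop Kc := by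
  rcases Set.eq_empty_or_nonempty Kc with h | hne
  · subst h
    intro u _
    filter_upwards with l x hx
    exact absurd hx (Set.notMem_empty x)
  obtain ⟨a, haK, hamin⟩ := hK.exists_isLeast hne
  have ha : 1 < a := hK1 haK
  set Ca := ∑' i:ℕ, (i:ℝ)^2 * (1/a)^i with hCa
  set B : ℕ → ℝ := fun l => Ca/l + (1/a)^(l+1) / (1 - 1/a) with hB
  have hBtend : Tendsto B atTop (nhds 0) := by
    have h1 : Tendsto (fun l : ℕ => Ca/l) atTop (nhds 0) :=
      tendsto_const_div_atTop_nhds_zero_nat Ca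
    have ha1 : |1/a| < 1 := by
      rw [abs_of_pos (by positivity)]
      rw [div_lt_one (by linarith)]; exact ha
    have h2 : Tendsto (fun l : ℕ => (1/a)^(l+1) / (1 - 1/a)) atTop (nhds 0) := by
      have := (tendsto_pow_atTop_nhds_zero_of_norm_lt_one (x := (1:ℝ)/a)
        (by rwa [Real.norm_eq_abs])).comp (tendsto_add_atTop_nat 1)
      have := this.div_const (1 - 1/a)
      simpa using this
    have h3 := h1.add h2
    rw [add_zero] at h3
    exact h3
  have hA : Tendsto (fun l => Real.sqrt Real.pi / Stirling.stirlingSeq l) atTop (nhds 1) := by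
    have h := tendsto_const_nhds (x := Real.sqrt Real.pi) (f := atTop (α := ℕ))
      |>.div Stirling.tendsto_stirlingSeq_sqrt_pi
      (ne_of_gt (Real.sqrt_pos.mpr Real.pi_pos))
    rw [div_self (ne_of_gt (Real.sqrt_pos.mpr Real.pi_pos))] at h; exact h
  rw [Metric.tendstoUniformlyOn_iff]
  intro ε hε
  have hev1 : ∀ᶠ l : ℕ in atTop,
      |Real.sqrt Real.pi / Stirling.stirlingSeq l - 1| < ε/2 := by
    have := hA
    rw [Metric.tendsto_atTop] at this
    obtain ⟨N, hN⟩ := this (ε/2) (by linarith)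
    filter_upwards [eventually_ge_atTop N] with l hl
    have := hN l hl
    rwa [Real.dist_eq] at this
  have hev2 : ∀ᶠ l : ℕ in atTop, B l < ε/2 := by
    have := hBtend
    rw [Metric.tendsto_atTop] at this
    obtain ⟨N, hN⟩ := this (ε/2) (by linarith)
    filter_upwards [eventually_ge_atTop N] with l hl
    have := hN l hl
    rw [Real.dist_eq] at this
    calc B l ≤ |B l - 0| := by rw [sub_zero]; exact le_abs_self _
      _ < ε/2 := this
  filter_upwards [hev1, hev2, eventually_ge_atTop 1] with l h1 h2 hl x hx
  have hax : a ≤ x := hamin hx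
  have hx1 : 1 < x := hK1 hx
  have hx0 : 0 < x := by linarith
  obtain ⟨hd0, hd1⟩ := TT_bounds l hl ha hax
  have hw0 : 0 < (x-1)/x := div_pos (by linarith) hx0
  have hw1 : (x-1)/x ≤ 1 := by
    rw [div_le_one hx0]; linarith
  set g := TT l x * ((x-1)/x) with hg
  have hTT0 : 0 ≤ TT l x := by
    apply Finset.sum_nonneg
    intro i _
    positivity
  have hg0 : 0 ≤ g := mul_nonneg hTT0 (le_of_lt hw0)
  have hgid : 1 - g = (x/(x-1) - TT l x) * ((x-1)/x) := by
    rw [hg]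
    have n1 : x ≠ 0 := ne_of_gt hx0
    have n2 : x - 1 ≠ 0 := by intro h; apply absurd hx1; simp; nlinarith
    field_simp
  have hg1 : 1 - g ≤ B l := by
    rw [hgid]
    calc (x/(x-1) - TT l x) * ((x-1)/x) ≤ (x/(x-1) - TT l x) * 1 :=
          mul_le_mul_of_nonneg_left hw1 hd0
      _ ≤ B l := by rw [mul_one]; exact hd1
  have hg2 : 0 ≤ 1 - g := by
    rw [hgid]
    exact mul_nonneg hd0 (le_of_lt hw0)
  set A := Real.sqrt Real.pi / Stirling.stirlingSeq l with hA'
  rw [Real.dist_eq]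
  simp only [Pi.zero_apply]
  have : (0:ℝ) - eps l x = -(A * g - 1) := by
    rw [eps]; ring
  rw [this, abs_neg]
  have hgle : g ≤ 1 := by linarith
  have key : |A * g - 1| ≤ |A - 1| * g + (1 - g) := by
    have : A * g - 1 = (A - 1) * g - (1 - g) := by ring
    rw [this]
    calc |(A - 1) * g - (1 - g)| ≤ |(A - 1) * g| + |1 - g| := abs_sub _ _
      _ = |A - 1| * g + (1 - g) := by
          rw [abs_mul, _root_.abs_of_nonneg hg0, _root_.abs_of_nonneg hg2]
  calc |A * g - 1| ≤ |A - 1| * g + (1 - g) := key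
    _ ≤ |A - 1| * 1 + B l := by
        apply add_le_add _ hg1
        exact mul_le_mul_of_nonneg_left hgle (abs_nonneg _)
    _ < ε/2 + ε/2 := by rw [mul_one]; exact add_lt_add h1 h2
    _ = ε := by ring

lemma pow_div_fact_mono (x : ℝ) (i : ℕ) : ∀ j, i ≤ j → (j:ℝ) ≤ x →
    x^i / (Nat.factorial i) ≤ x^j / (Nat.factorial j) := by
  intro j
  induction j with
  | zero => intro h _; interval_cases i; exact le_refl _
  | succ j ih =>
    intro hij hx
    have hx' : (j:ℝ) ≤ x := by push_cast at hx ⊢; linarith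
    rcases Nat.lt_or_ge i (j+1) with h | h
    · have hij' : i ≤ j := by omega
      have hj1 : (0:ℝ) < (j:ℝ)+1 := by positivity
      have hx0 : 0 < x := by
        have : ((j:ℝ)+1) ≤ x := by push_cast at hx; linarith
        linarith
      calc x^i / (Nat.factorial i) ≤ x^j / (Nat.factorial j) := ih hij' hx'
        _ ≤ x^(j+1) / (Nat.factorial (j+1)) := by
            rw [pow_succ, Nat.factorial_succ]
            push_cast
            rw [div_le_div_iff₀ (by positivity) (by positivity)]
            have h1 : (0:ℝ) < x^j := by positivity
            have h2 : (0:ℝ) < (Nat.factorial j : ℝ) := by positivity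
            have hx1 : ((j:ℝ)+1) ≤ x := by push_cast at hx; linarith
            nlinarith [mul_le_mul_of_nonneg_left hx1 (le_of_lt (mul_pos h1 h2))]
    · have : i = j+1 := by omega
      subst this
      exact le_refl _

lemma fact_ratio (k n : ℕ) (hk : 1 ≤ k) (hkn : k ≤ n) :
    ((n-1).factorial : ℝ) ≤ ((k-1).factorial : ℝ) * (n:ℝ)^(n-k) := by
  have h1 : n - k ≤ n - 1 := by omega
  have h2 : (n-1) - (n-k) = k - 1 := by omega
  have h3 : (k-1).factorial * (n-1).descFactorial (n-k) = (n-1).factorial := by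
    rw [← h2]
    exact Nat.factorial_mul_descFactorial h1
  have h4 : (n-1).descFactorial (n-k) ≤ (n-1)^(n-k) := Nat.descFactorial_le_pow _ _
  have h5 : ((n-1):ℕ)^(n-k) ≤ n^(n-k) := Nat.pow_le_pow_left (by omega) _
  have : (n-1).factorial ≤ (k-1).factorial * n^(n-k) := by
    rw [← h3]
    exact Nat.mul_le_mul_left _ (le_trans h4 h5)
  exact_mod_cast this

set_option maxHeartbeats 1000000

lemma y_theta (θ : ℝ) (hθ0 : 0 < θ) (hθ1 : θ < 1) (y : ℝ) (hy : 0 ≤ y) :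
    y * θ ^ y ≤ 1/(-Real.log θ) := by
  set s := -Real.log θ with hs
  have hs0 : 0 < s := by
    rw [hs]; exact neg_pos.mpr (Real.log_neg hθ0 hθ1)
  have hexp : θ ^ y = Real.exp (-(s*y)) := by
    rw [Real.rpow_def_of_pos hθ0, hs]; ring_nf
  have hkey : s*y ≤ Real.exp (s*y) := by
    have := Real.add_one_le_exp (s*y)
    linarith
  rw [hexp]
  rw [Real.exp_neg]
  rw [div_eq_mul_inv, one_mul]
  have he : 0 < Real.exp (s*y) := Real.exp_pos _
  rw [← mul_le_mul_iff_right₀ hs0]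
  calc s * (y * (Real.exp (s*y))⁻¹) = (s*y) * (Real.exp (s*y))⁻¹ := by ring
    _ ≤ Real.exp (s*y) * (Real.exp (s*y))⁻¹ := by
        apply mul_le_mul_of_nonneg_right hkey (by positivity)
    _ = 1 := by field_simp
    _ ≤ s * s⁻¹ := by rw [mul_inv_cancel₀ (ne_of_gt hs0)]

/-- Szegő's estimate
`E_l(lx) = (1/√(2πl)) (ex)^l · x/(x−1) · (1 + ε_l(x))` with `ε_l → 0` uniformly on compact
subsets of `(1,∞)`; consequently if `k/m → β`, `n/m → τ` with `r² < β < τ < |z₀|²` and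
`m → ∞`, then `E_{k−1}(m|z₀|²)/E_{n−1}(m|z₀|²) → 0` exponentially fast. -/
theorem szego_estimate_and_exponential_decay :
    (∃ εl : ℕ → ℝ → ℝ,
      (∀ l : ℕ, 1 ≤ l → ∀ x : ℝ, 1 < x →
        ER (l : ℤ) ((l : ℝ) * x) =
          (1 / Real.sqrt (2 * Real.pi * l)) * (Real.exp 1 * x) ^ l * (x / (x - 1)) *
            (1 + εl l x)) ∧
      (∀ Kc : Set ℝ, IsCompact Kc → Kc ⊆ Set.Ioi 1 →
        TendstoUniformlyOn (fun l x => εl l x) 0 atTop Kc)) ∧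
    (∀ (z₀ : ℂ) (r β τ : ℝ), 0 < r → r ^ 2 < β → β < τ → τ < ‖z₀‖ ^ 2 →
      ∀ (m : ℕ → ℝ) (k n : ℕ → ℕ),
        Tendsto m atTop atTop → (∀ j, 0 < m j) →
        Tendsto (fun j => (k j : ℝ) / m j) atTop (nhds β) →
        Tendsto (fun j => (n j : ℝ) / m j) atTop (nhds τ) →
        ∃ c > (0:ℝ), ∃ θ ∈ Set.Ioo (0:ℝ) 1, ∀ᶠ j in atTop,
          ER ((k j : ℤ) - 1) (m j * ‖z₀‖ ^ 2) / ER ((n j : ℤ) - 1) (m j * ‖z₀‖ ^ 2) ≤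
            c * θ ^ (m j)) := by
  constructor
  · exact ⟨eps, eq_part, unif_part⟩
  ·
    intro z₀ r β τ hr hrβ hβτ hτK m k n hm hm0 hk hn
    set K := ‖z₀‖^2 with hKdef
    have hβ0 : 0 < β := lt_trans (by positivity) hrβ
    have hτ0 : 0 < τ := lt_trans hβ0 hβτ
    have hK0 : 0 < K := lt_trans hτ0 hτK
    set ρ : ℝ := (τ/K + 1)/2 with hρdef
    have hτK' : τ/K < 1 := by rw [div_lt_one hK0]; exact hτK
    have hρτ : τ/K < ρ := by rw [hρdef]; linarith
    have hρ1 : ρ < 1 := by rw [hρdef]; linarith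
    have hρ0 : 0 < ρ := by rw [hρdef]; positivity
    set γ : ℝ := (τ - β)/3 with hγdef
    have hγ0 : 0 < γ := by rw [hγdef]; linarith
    set θ : ℝ := ρ ^ (γ/2) with hθdef
    have hθ0 : 0 < θ := Real.rpow_pos_of_pos hρ0 _
    have hθ1 : θ < 1 := Real.rpow_lt_one (le_of_lt hρ0) hρ1 (by positivity)
    set c₀ : ℝ := -Real.log θ with hc₀def
    have hc₀ : 0 < c₀ := by rw [hc₀def]; exact neg_pos.mpr (Real.log_neg hθ0 hθ1)
    refine ⟨(β+γ)/c₀ + 1, by positivity, θ, ⟨hθ0, hθ1⟩, ?_⟩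
    -- eventual facts
    have hkev : ∀ᶠ j in atTop, (k j : ℝ) / m j ∈
        Set.Ioo (β - β/2) (β + min γ ((K-β)/2)) := by
      apply hk
      apply Ioo_mem_nhds
      · linarith
      · have h1 : 0 < min γ ((K-β)/2) := lt_min hγ0 (by linarith)
        linarith
    have hρK : τ < ρ * K := (div_lt_iff₀ hK0).mp hρτ
    have hnev : ∀ᶠ j in atTop, (n j : ℝ) / m j ∈ Set.Ioo (τ - γ) (ρ*K) := by
      apply hn
      apply Ioo_mem_nhds
      · linarith
      · exact hρK
    filter_upwards [hkev, hnev, hm.eventually_ge_atTop 1] with j hkj hnj hmj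
    obtain ⟨hk1', hk2'⟩ := hkj
    obtain ⟨hn1', hn2'⟩ := hnj
    set M := m j with hMdef
    have hM : 0 < M := hm0 j
    -- basic bounds on k j, n j
    have hkpos : (0:ℝ) < (k j : ℝ) := by
      have : 0 < (k j : ℝ)/M := by linarith
      calc (0:ℝ) < ((k j : ℝ)/M) * M := by positivity
        _ = (k j : ℝ) := by field_simp
    have hk1 : 1 ≤ k j := by
      by_contra h
      push_neg at h
      interval_cases (k j)
      simp at hkpos
    have hkx : (k j : ℝ) ≤ M * K := by
      have h1 : (k j : ℝ)/M < K := by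
        have := min_le_right γ ((K-β)/2)
        have : (k j : ℝ)/M < β + (K-β)/2 := by linarith
        linarith
      calc (k j : ℝ) = ((k j : ℝ)/M) * M := by field_simp
        _ ≤ K * M := mul_le_mul_of_nonneg_right (le_of_lt h1) (le_of_lt hM)
        _ = M * K := by ring
    have hkC : (k j : ℝ) ≤ (β+γ) * M := by
      have h1 : (k j : ℝ)/M < β + γ := by
        have h2 := min_le_left γ ((K-β)/2)
        linarith
      calc (k j : ℝ) = ((k j : ℝ)/M) * M := by field_simp
        _ ≤ (β+γ) * M := mul_le_mul_of_nonneg_right (le_of_lt h1) (le_of_lt hM)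
    have hnρ : (n j : ℝ) ≤ ρ * (M * K) := by
      calc (n j : ℝ) = ((n j : ℝ)/M) * M := by field_simp
        _ ≤ (ρ*K) * M := mul_le_mul_of_nonneg_right (le_of_lt hn2') (le_of_lt hM)
        _ = ρ * (M * K) := by ring
    have hgap : γ * M ≤ (n j : ℝ) - (k j : ℝ) := by
      have h1 : (k j : ℝ)/M < β + γ := by
        have := min_le_left γ ((K-β)/2); linarith
      have h2 : τ - γ < (n j : ℝ)/M := hn1'
      have h3 : γ < (n j : ℝ)/M - (k j : ℝ)/M := by
        rw [hγdef] at *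
        linarith
      have h4 : (n j : ℝ)/M - (k j : ℝ)/M = ((n j : ℝ) - (k j : ℝ))/M := by ring
      rw [h4] at h3
      calc γ * M ≤ (((n j : ℝ) - (k j : ℝ))/M) * M :=
            mul_le_mul_of_nonneg_right (le_of_lt h3) (le_of_lt hM)
        _ = (n j : ℝ) - (k j : ℝ) := by field_simp
    have hkn : k j ≤ n j := by
      have : (k j : ℝ) < (n j : ℝ) := by nlinarith
      exact_mod_cast le_of_lt this
    have hn1 : 1 ≤ n j := le_trans hk1 hkn
    set x := M * K with hxdef
    have hx0 : 0 < x := by positivity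
    -- rewrite ER
    have ek : ((k j : ℤ) - 1 + 1).toNat = k j := by omega
    have en : ((n j : ℤ) - 1 + 1).toNat = n j := by omega
    rw [ER, ER, ek, en]
    set N := ∑ i ∈ Finset.range (k j), x^i / (Nat.factorial i) with hNdef
    set D := ∑ i ∈ Finset.range (n j), x^i / (Nat.factorial i) with hDdef
    have hNle : N ≤ (k j : ℝ) * (x^(k j - 1) / (Nat.factorial (k j - 1))) := by
      rw [hNdef]
      have := Finset.sum_le_card_nsmul (Finset.range (k j))
        (fun i => x^i / (Nat.factorial i)) (x^(k j - 1) / (Nat.factorial (k j - 1))) ?_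
      · simpa [Finset.card_range, nsmul_eq_mul] using this
      · intro i hi
        simp only [Finset.mem_range] at hi
        apply pow_div_fact_mono x i (k j - 1) (by omega)
        calc ((k j - 1 : ℕ) : ℝ) ≤ (k j : ℝ) := by
              have : (k j - 1 : ℕ) ≤ k j := by omega
              exact_mod_cast this
          _ ≤ x := hkx
    have hDge : x^(n j - 1) / (Nat.factorial (n j - 1)) ≤ D := by
      rw [hDdef]
      apply Finset.single_le_sum (f := fun i => x^i / (Nat.factorial i))
      · intro i _; positivity
      · simp only [Finset.mem_range]; omega
    have hD0 : (0:ℝ) < x^(n j - 1) / (Nat.factorial (n j - 1)) := by positivity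
    have hN0 : (0:ℝ) ≤ (k j : ℝ) * (x^(k j - 1) / (Nat.factorial (k j - 1))) := by positivity
    have step1 : N / D ≤ ((k j : ℝ) * (x^(k j - 1) / (Nat.factorial (k j - 1)))) /
        (x^(n j - 1) / (Nat.factorial (n j - 1))) := div_le_div₀ hN0 hNle hD0 hDge
    have e1 : ((k j : ℝ) * (x^(k j - 1) / (Nat.factorial (k j - 1)))) /
        (x^(n j - 1) / (Nat.factorial (n j - 1)))
        = (k j : ℝ) * (((n j - 1).factorial : ℝ) /
          (((k j - 1).factorial : ℝ) * x^(n j - k j))) := by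
      rw [show n j - 1 = (k j - 1) + (n j - k j) from by omega, pow_add]
      have f1 : ((k j - 1).factorial : ℝ) ≠ 0 := by positivity
      have f2 : ((n j - 1).factorial : ℝ) ≠ 0 := by positivity
      have f3 : x ≠ 0 := ne_of_gt hx0
      field_simp
    have step3 : ((n j - 1).factorial : ℝ) / (((k j - 1).factorial : ℝ) * x^(n j - k j))
        ≤ ρ^(n j - k j) := by
      rw [div_le_iff₀ (by positivity)]
      calc ((n j - 1).factorial : ℝ)
          ≤ ((k j - 1).factorial : ℝ) * (n j : ℝ)^(n j - k j) := fact_ratio _ _ hk1 hkn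
        _ ≤ ((k j - 1).factorial : ℝ) * (ρ*x)^(n j - k j) := by
            gcongr
        _ = ρ^(n j - k j) * (((k j - 1).factorial : ℝ) * x^(n j - k j)) := by
            rw [mul_pow]; ring
    have step4 : (ρ:ℝ)^(n j - k j) ≤ θ^M * θ^M := by
      have c1 : (ρ:ℝ)^(n j - k j) = ρ ^ (((n j - k j : ℕ)):ℝ) := (Real.rpow_natCast ρ _).symm
      have c2 : (((n j - k j : ℕ)):ℝ) = (n j : ℝ) - (k j : ℝ) := by
        exact Nat.cast_sub hkn
      rw [c1, c2]
      have h1 : ρ ^ ((n j : ℝ) - (k j : ℝ)) ≤ ρ ^ (γ * M) :=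
        Real.rpow_le_rpow_of_exponent_ge hρ0 (le_of_lt hρ1) hgap
      have h2 : ρ ^ (γ * M) = θ^M * θ^M := by
        rw [show γ * M = (γ/2) * M + (γ/2) * M from by ring]
        rw [Real.rpow_add hρ0]
        rw [Real.rpow_mul (le_of_lt hρ0), hθdef]
      rw [← h2]
      exact h1
    have hθM : (0:ℝ) < θ^M := Real.rpow_pos_of_pos hθ0 _
    have hyt : M * θ^M ≤ 1/c₀ := y_theta θ hθ0 hθ1 M (le_of_lt hM)
    calc N / D ≤ (k j : ℝ) * (((n j - 1).factorial : ℝ) /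
          (((k j - 1).factorial : ℝ) * x^(n j - k j))) := by rw [← e1]; exact step1
      _ ≤ (k j : ℝ) * (θ^M * θ^M) := by
          apply mul_le_mul_of_nonneg_left _ (Nat.cast_nonneg _)
          exact le_trans step3 step4
      _ ≤ ((β+γ) * M) * (θ^M * θ^M) := by
          apply mul_le_mul_of_nonneg_right hkC (by positivity)
      _ = (β+γ) * ((M * θ^M) * θ^M) := by ring
      _ ≤ (β+γ) * ((1/c₀) * θ^M) := by
          apply mul_le_mul_of_nonneg_left _ (by linarith)
          exact mul_le_mul_of_nonneg_right hyt (le_of_lt hθM)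
      _ = ((β+γ)/c₀) * θ^M := by ring
      _ ≤ ((β+γ)/c₀ + 1) * θ^M := by nlinarith
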